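/- arXiv:2405.09656 — 2 statements merged into one kernel-verified Lean document; each statement's English description precedes it below -/
import Mathlib

section
/- If G is a distance critical simple graph and H is any simple graph, then the Cartesian (box) product G □ H is distance critical; more precisely, every vertex of G □ H admits a determining pair. -/
/-- A graph is *distance critical* if for every vertex `v` there is a pair of vertices of
`G − v` whose distance in `G − v` differs from their distance in `G`
(distances are `ℕ∞`-valued, `⊤` when there is no connecting path). -/
def IsDistanceCritical {V : Type*} (G : SimpleGraph V) : Prop :=
  ∀ v : V, ∃ x y : ({v}ᶜ : Set V),
    (G.induce ({v}ᶜ : Set V)).edist x y ≠ G.edist (x : V) (y : V)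

/-- `{a, b}` is a *determining pair* for `v` : `a` and `b` are distinct, nonadjacent,
and `v` is their unique common neighbor. -/
def IsDeterminingPair {V : Type*} (G : SimpleGraph V) (v a b : V) : Prop :=
  a ≠ b ∧ ¬ G.Adj a b ∧ G.Adj a v ∧ G.Adj b v ∧
    ∀ w : V, G.Adj a w → G.Adj b w → w = v

open SimpleGraph in
/-- A walk in `G` staying in `s` lifts to the induced subgraph. -/
lemma aux_walk_to_induce {V : Type*} {G : SimpleGraph V} {s : Set V} :
    ∀ {a b : V} (p : G.Walk a b), (∀ w ∈ p.support, w ∈ s) → ∀ (ha : a ∈ s) (hb : b ∈ s),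
      ∃ q : (G.induce s).Walk ⟨a, ha⟩ ⟨b, hb⟩, q.length = p.length
  | _, _, .nil, _, ha, hb => ⟨.nil, rfl⟩
  | _, _, .cons h q, hp, ha, hb => by
      obtain ⟨q', hq'⟩ := aux_walk_to_induce q (fun w hw => hp w (by simp [hw]))
        (hp _ (by simp)) hb
      exact ⟨.cons (by exact h) q', congrArg (· + 1) hq'⟩

open SimpleGraph in
lemma aux_edist_le_induce {V : Type*} (G : SimpleGraph V) (s : Set V) (x y : s) :
    G.edist (x : V) (y : V) ≤ (G.induce s).edist x y := by
  rw [SimpleGraph.edist_eq_sInf (G := G.induce s)]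
  refine le_sInf ?_
  rintro n ⟨w, rfl⟩
  calc G.edist (x : V) (y : V)
      ≤ ((w.map (SimpleGraph.Embedding.induce s).toHom).length : ℕ∞) := G.edist_le _
    _ = (w.length : ℕ∞) := by rw [SimpleGraph.Walk.length_map]

open SimpleGraph Walk in
/-- If removing `v` changes some distance, then `v` has a determining pair. -/
lemma aux_exists_determining {V : Type*} {G : SimpleGraph V} {v : V}
    (x y : ({v}ᶜ : Set V))
    (h : (G.induce ({v}ᶜ : Set V)).edist x y ≠ G.edist (x : V) (y : V)) :
    ∃ a b : V, IsDeterminingPair G v a b := by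
  classical
  let s : Set V := {v}ᶜ
  have hs : s = {v}ᶜ := rfl
  have hle : G.edist (x : V) (y : V) ≤ (G.induce s).edist x y :=
    aux_edist_le_induce G s x y
  have hlt : G.edist (x : V) (y : V) < (G.induce s).edist x y := lt_of_le_of_ne hle (Ne.symm h)
  have hnetop : G.edist (x : V) (y : V) ≠ ⊤ := hlt.ne_top
  have hr : G.Reachable (x : V) (y : V) := G.reachable_of_edist_ne_top hnetop
  obtain ⟨p0, hp0⟩ := hr.exists_walk_length_eq_edist
  set p : G.Walk (x : V) (y : V) := p0.bypass with hpdef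
  have hpath : p.IsPath := p0.bypass_isPath
  have hplen : (p.length : ℕ∞) = G.edist (x : V) (y : V) := by
    refine le_antisymm ?_ ?_
    · rw [← hp0]
      exact_mod_cast Nat.cast_le.mpr p0.length_bypass_le
    · exact G.edist_le p
  -- `v` lies on `p`
  have hvmem : v ∈ p.support := by
    by_contra hv
    have hmem : ∀ w ∈ p.support, w ∈ s := by
      intro w hw
      simp only [hs, Set.mem_compl_iff, Set.mem_singleton_iff]
      rintro rfl; exact hv hw
    obtain ⟨q, hq⟩ := aux_walk_to_induce p hmem x.2 y.2
    have hq' : (G.induce s).edist x y ≤ (p.length : ℕ∞) := by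
      have h1 : (G.induce s).edist ⟨(x : V), x.2⟩ ⟨(y : V), y.2⟩ ≤ (q.length : ℕ∞) :=
        (G.induce s).edist_le q
      rwa [hq] at h1
    rw [hplen] at hq'
    exact absurd hq' (not_le.mpr hlt)
  have hvx : v ≠ (x : V) := fun hh => x.2 (by simp [hs, hh])
  have hvy : v ≠ (y : V) := fun hh => y.2 (by simp [hs, hh])
  set q1 : G.Walk (x : V) v := p.takeUntil v hvmem with hq1def
  set q2 : G.Walk v (y : V) := p.dropUntil v hvmem with hq2def
  have hq1path : q1.IsPath := hpath.takeUntil hvmem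
  have hq2path : q2.IsPath := hpath.dropUntil hvmem
  have hq1r : ¬ q1.reverse.Nil := Walk.not_nil_of_ne hvx
  have hq2n : ¬ q2.Nil := Walk.not_nil_of_ne hvy
  set a : V := q1.reverse.getVert 1 with hadef
  set b : V := q2.getVert 1 with hbdef
  have hva : G.Adj v a := Walk.adj_snd hq1r
  have hvb : G.Adj v b := Walk.adj_snd hq2n
  set r1 : G.Walk (x : V) a := q1.reverse.tail.reverse with hr1def
  set r2 : G.Walk b (y : V) := q2.tail with hr2def
  -- lengths
  have hlen1 : r1.length + 1 = q1.length := by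
    rw [hr1def, Walk.length_reverse, Walk.length_tail_add_one hq1r, Walk.length_reverse]
  have hlen2 : r2.length + 1 = q2.length := by
    rw [hr2def, Walk.length_tail_add_one hq2n]
  have hlen : q1.length + q2.length = p.length := by
    conv_rhs => rw [← p.take_spec hvmem]
    rw [Walk.length_append]
  -- v is not on r1 or r2
  have hvr1 : v ∉ r1.support := by
    have h1 : v :: q1.reverse.tail.support = q1.reverse.support :=
      Walk.cons_support_tail hq1r
    have h2 : q1.reverse.support.Nodup := (hq1path.reverse).support_nodup
    rw [← h1, List.nodup_cons] at h2
    intro hmem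
    rw [hr1def, Walk.support_reverse, List.mem_reverse] at hmem
    exact h2.1 hmem
  have hvr2 : v ∉ r2.support := by
    have h1 : v :: q2.tail.support = q2.support := Walk.cons_support_tail hq2n
    have h2 : q2.support.Nodup := hq2path.support_nodup
    rw [← h1, List.nodup_cons] at h2
    exact h2.1
  have hplen' : p.length = r1.length + r2.length + 2 := by omega
  -- nonadjacency of a and b
  have hnab : ¬ G.Adj a b := by
    intro hab
    have hW : G.edist (x : V) (y : V) ≤ ((r1.append (Walk.cons hab r2)).length : ℕ∞) :=
      G.edist_le _
    rw [← hplen, Nat.cast_le, Walk.length_append, Walk.length_cons] at hW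
    omega
  -- a ≠ b
  have hab : a ≠ b := by
    intro hab
    have hW : G.edist (x : V) (y : V) ≤ ((r1.append (r2.copy hab.symm rfl)).length : ℕ∞) :=
      G.edist_le _
    rw [← hplen, Nat.cast_le, Walk.length_append, Walk.length_copy] at hW
    omega
  refine ⟨a, b, hab, hnab, hva.symm, hvb.symm, ?_⟩
  -- uniqueness of common neighbor
  intro w haw hbw
  by_contra hwv
  have hws : w ∈ s := by simp [hs, hwv]
  set W : G.Walk (x : V) (y : V) := r1.append (Walk.cons haw (Walk.cons hbw.symm r2))
    with hWdef
  have hWlen : W.length = p.length := by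
    rw [hWdef, Walk.length_append, Walk.length_cons, Walk.length_cons]
    omega
  have hWs : ∀ u ∈ W.support, u ∈ s := by
    intro u hu
    rw [hWdef, Walk.mem_support_append_iff] at hu
    simp only [hs, Set.mem_compl_iff, Set.mem_singleton_iff]
    rintro rfl
    rcases hu with hu | hu
    · exact hvr1 hu
    · simp only [Walk.support_cons, List.mem_cons] at hu
      rcases hu with hu | hu | hu
      · exact G.irrefl (hu ▸ hva)
      · exact hwv hu.symm
      · exact hvr2 hu
  obtain ⟨q, hq⟩ := aux_walk_to_induce W hWs x.2 y.2
  have h1 : (G.induce s).edist ⟨(x : V), x.2⟩ ⟨(y : V), y.2⟩ ≤ (q.length : ℕ∞) :=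
    (G.induce s).edist_le q
  rw [hq, hWlen, hplen] at h1
  exact absurd h1 (not_le.mpr hlt)

open SimpleGraph in
/-- A determining pair for `v` witnesses a distance change upon deleting `v`. -/
lemma aux_determining_edist_ne {V : Type*} {G : SimpleGraph V} {v a b : V}
    (h : IsDeterminingPair G v a b) :
    ∃ x y : ({v}ᶜ : Set V),
      (G.induce ({v}ᶜ : Set V)).edist x y ≠ G.edist (x : V) (y : V) := by
  obtain ⟨hab, hnadj, hav, hbv, huniq⟩ := h
  have ha : a ∈ ({v}ᶜ : Set V) := by
    simp only [Set.mem_compl_iff, Set.mem_singleton_iff]; exact hav.ne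
  have hb : b ∈ ({v}ᶜ : Set V) := by
    simp only [Set.mem_compl_iff, Set.mem_singleton_iff]; exact hbv.ne
  refine ⟨⟨a, ha⟩, ⟨b, hb⟩, ?_⟩
  have h2 : G.edist a b = 2 := by
    have hle : G.edist a b ≤ 2 := by
      have := G.edist_le (Walk.cons hav (Walk.cons hbv.symm Walk.nil))
      simpa using this
    have h0 : G.edist a b ≠ 0 := fun hc => hab (SimpleGraph.edist_eq_zero_iff.mp hc)
    have h1 : G.edist a b ≠ 1 := fun hc => hnadj (SimpleGraph.edist_eq_one_iff_adj.mp hc)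
    lift G.edist a b to ℕ using ne_top_of_le_ne_top (by decide) hle with n hn
    have hle' : n ≤ 2 := by exact_mod_cast hle
    have h0' : n ≠ 0 := by exact_mod_cast h0
    have h1' : n ≠ 1 := by exact_mod_cast h1
    have : n = 2 := by omega
    exact_mod_cast this
  intro hcontra
  rw [h2] at hcontra
  -- extract a walk of length 2 in the induced graph
  have hrt : (G.induce ({v}ᶜ : Set V)).Reachable ⟨a, ha⟩ ⟨b, hb⟩ :=
    SimpleGraph.reachable_of_edist_ne_top (by rw [hcontra]; decide)
  obtain ⟨q, hq⟩ := hrt.exists_walk_length_eq_edist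
  rw [hcontra] at hq
  have hqlen : q.length = 2 := by exact_mod_cast hq
  have h01 : (G.induce ({v}ᶜ : Set V)).Adj (q.getVert 0) (q.getVert 1) :=
    q.adj_getVert_succ (by omega)
  have h12 : (G.induce ({v}ᶜ : Set V)).Adj (q.getVert 1) (q.getVert 2) :=
    q.adj_getVert_succ (by omega)
  rw [q.getVert_zero] at h01
  have hend : q.getVert 2 = ⟨b, hb⟩ := by
    have := q.getVert_length
    rwa [hqlen] at this
  rw [hend] at h12
  set w : ({v}ᶜ : Set V) := q.getVert 1 with hw
  have haw : G.Adj a (w : V) := h01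
  have hbw : G.Adj b (w : V) := h12.symm
  have : (w : V) = v := huniq _ haw hbw
  exact w.2 (by simp [this])

theorem stmt_10 {α β : Type*} [Fintype α] [Fintype β]
    (G : SimpleGraph α) (H : SimpleGraph β) (hG : IsDistanceCritical G) :
    IsDistanceCritical (G □ H) ∧
      ∀ p : α × β, ∃ a b : α × β, IsDeterminingPair (G □ H) p a b := by
  have key : ∀ p : α × β, ∃ a b : α × β, IsDeterminingPair (G □ H) p a b := by
    rintro ⟨g, h⟩
    obtain ⟨x, y, hxy⟩ := hG g
    obtain ⟨a₀, b₀, hab, hnadj, hav, hbv, huniq⟩ := aux_exists_determining x y hxy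
    refine ⟨(a₀, h), (b₀, h), ?_, ?_, ?_, ?_, ?_⟩
    · intro hc; exact hab (congrArg Prod.fst hc)
    · rw [SimpleGraph.boxProd_adj]
      rintro (⟨h1, -⟩ | ⟨h1, -⟩)
      · exact hnadj h1
      · exact H.irrefl h1
    · exact SimpleGraph.boxProd_adj.mpr (Or.inl ⟨hav, rfl⟩)
    · exact SimpleGraph.boxProd_adj.mpr (Or.inl ⟨hbv, rfl⟩)
    · rintro ⟨w₁, w₂⟩ hw1 hw2
      rw [SimpleGraph.boxProd_adj] at hw1 hw2
      rcases hw1 with ⟨ha1, rfl⟩ | ⟨ha1, ha2⟩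
      · rcases hw2 with ⟨hb1, -⟩ | ⟨hb1, hb2⟩
        · exact Prod.ext (huniq _ ha1 hb1) rfl
        · exact absurd hb1 (H.irrefl)
      · rcases hw2 with ⟨hb1, hb2⟩ | ⟨hb1, hb2⟩
        · exact absurd (hb2 ▸ ha1) (H.irrefl)
        · exact absurd (ha2.trans hb2.symm) hab
  refine ⟨?_, key⟩
  intro v
  obtain ⟨a, b, hdet⟩ := key v
  exact aux_determining_edist_ne hdet
end

section
/- Let G be an edge-maximal distance critical simple graph and let S be the set of vertices of G that belong to some determining pair (of some vertex). Then every non-edge of G intersects S; that is, for every pair of distinct nonadjacent vertices x and y of G, at least one of x, y lies in S. -/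
/-- The graph obtained from `G` by adding the edge `xy`. -/
def addEdge {V : Type*} (G : SimpleGraph V) (x y : V) : SimpleGraph V :=
  G ⊔ SimpleGraph.edge x y

open SimpleGraph

/-- A walk whose support lies in `s` lifts to the induced graph on `s`. -/
lemma walk_lift_induce {V : Type*} {G : SimpleGraph V} {s : Set V} :
    ∀ {x y : V} (p : G.Walk x y) (hx : x ∈ s) (hy : y ∈ s),
      (∀ z ∈ p.support, z ∈ s) →
      ∃ q : (G.induce s).Walk ⟨x, hx⟩ ⟨y, hy⟩, q.length = p.length := by
  intro x y p
  induction p with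
  | nil => exact fun hx hy _ => ⟨.nil, rfl⟩
  | @cons u w y h p ih =>
      intro hx hy hs
      have hw : w ∈ s := hs _ (by simp)
      obtain ⟨q, hq⟩ := ih hw hy (fun z hz => hs z (by simp [hz]))
      exact ⟨.cons (by exact h) q, congrArg (· + 1) hq⟩

/-- Edge distance in `G` is at most that in the induced subgraph. -/
lemma edist_le_induce {V : Type*} {G : SimpleGraph V} {s : Set V} (u w : s) :
    G.edist ↑u ↑w ≤ (G.induce s).edist u w := by
  rcases eq_or_ne ((G.induce s).edist u w) ⊤ with h | h
  · simp [h]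
  · obtain ⟨q, hq⟩ := exists_walk_of_edist_ne_top h
    rw [← hq]
    have := SimpleGraph.edist_le (q.map (SimpleGraph.Embedding.induce s).toHom)
    exact this.trans_eq (congrArg Nat.cast (SimpleGraph.Walk.length_map _ _))

/-- In a distance-critical situation at `v`, the vertex `v` has a determining pair. -/
lemma exists_determining_pair {V : Type*} {G : SimpleGraph V} {v : V}
    (h : ∃ x y : ({v}ᶜ : Set V),
      (G.induce ({v}ᶜ : Set V)).edist x y ≠ G.edist (x : V) (y : V)) :
    ∃ a b : V, IsDeterminingPair G v a b := by
  have : DecidableEq V := Classical.decEq V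
  obtain ⟨x, y, hne⟩ := h
  have hmono : G.edist ↑x ↑y ≤ (G.induce ({v}ᶜ : Set V)).edist x y := edist_le_induce x y
  have hlt : G.edist ↑x ↑y < (G.induce ({v}ᶜ : Set V)).edist x y := hmono.lt_of_ne hne.symm
  have htop : G.edist ↑x ↑y ≠ ⊤ := hlt.ne_top
  obtain ⟨p0, hp0⟩ := exists_walk_of_edist_ne_top htop
  set p : G.Walk ↑x ↑y := p0.bypass with hpdef
  have hpath : p.IsPath := p0.bypass_isPath
  have hD : G.edist ↑x ↑y = p.length := by
    refine le_antisymm (SimpleGraph.edist_le p) ?_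
    rw [← hp0]
    exact Nat.cast_le.mpr (SimpleGraph.Walk.length_bypass_le p0)
  -- v lies on p
  have hv : v ∈ p.support := by
    by_contra hvs
    obtain ⟨q, hq⟩ := walk_lift_induce p x.2 y.2 (fun z hz => by
      simp only [Set.mem_compl_iff, Set.mem_singleton_iff]
      rintro rfl; exact hvs hz)
    have h1 : (G.induce ({v}ᶜ : Set V)).edist x y ≤ p.length := by
      rw [← hq]
      simpa using SimpleGraph.edist_le q
    rw [← hD] at h1
    exact absurd h1 (not_le.mpr hlt)
  have hvx : v ≠ ↑x := fun h => x.2 (by simp [h])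
  have hvy : v ≠ ↑y := fun h => y.2 (by simp [h])
  -- decompose p at v
  set W1 : G.Walk v ↑x := (p.takeUntil v hv).reverse with hW1def
  set W2 : G.Walk v ↑y := p.dropUntil v hv with hW2def
  have hW1path : W1.IsPath := (hpath.takeUntil hv).reverse
  have hW2path : W2.IsPath := hpath.dropUntil hv
  have hW1nil : ¬ W1.Nil := SimpleGraph.Walk.not_nil_of_ne hvx
  have hW2nil : ¬ W2.Nil := SimpleGraph.Walk.not_nil_of_ne hvy
  set a : V := W1.getVert 1 with hadef
  set b : V := W2.getVert 1 with hbdef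
  have hva : G.Adj v a := W1.adj_snd hW1nil
  have hvb : G.Adj v b := W2.adj_snd hW2nil
  set T1 : G.Walk a ↑x := W1.tail with hT1def
  set T2 : G.Walk b ↑y := W2.tail with hT2def
  have hlen1 : T1.length + 1 = W1.length := SimpleGraph.Walk.length_tail_add_one hW1nil
  have hlen2 : T2.length + 1 = W2.length := SimpleGraph.Walk.length_tail_add_one hW2nil
  have hDsum : W1.length + W2.length = p.length := by
    have := congrArg SimpleGraph.Walk.length (p.take_spec hv)
    rw [SimpleGraph.Walk.length_append] at this
    rw [hW1def, hW2def, SimpleGraph.Walk.length_reverse]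
    exact this
  have hT1sup : v ∉ T1.support := by
    have h1 : T1.support = W1.support.tail :=
      SimpleGraph.Walk.support_tail_of_not_nil _ hW1nil
    have h2 := hW1path.support_nodup
    rw [W1.support_eq_cons] at h2
    rw [h1]
    exact (List.nodup_cons.mp h2).1
  have hT2sup : v ∉ T2.support := by
    have h1 : T2.support = W2.support.tail :=
      SimpleGraph.Walk.support_tail_of_not_nil _ hW2nil
    have h2 := hW2path.support_nodup
    rw [W2.support_eq_cons] at h2
    rw [h1]
    exact (List.nodup_cons.mp h2).1
  have hane : a ≠ v := hva.ne'
  have hbne : b ≠ v := hvb.ne'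
  -- a ≠ b
  have hab_ne : a ≠ b := by
    intro h
    have hthis := SimpleGraph.edist_le (T1.reverse.append (T2.copy h.symm rfl))
    rw [SimpleGraph.Walk.length_append, SimpleGraph.Walk.length_reverse,
      SimpleGraph.Walk.length_copy, hD] at hthis
    have hnat : p.length ≤ T1.length + T2.length := by exact_mod_cast hthis
    omega
  -- ¬ Adj a b
  have hab_nadj : ¬ G.Adj a b := by
    intro hab
    have hthis := SimpleGraph.edist_le (T1.reverse.append (SimpleGraph.Walk.cons hab T2))
    rw [SimpleGraph.Walk.length_append, SimpleGraph.Walk.length_reverse,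
      SimpleGraph.Walk.length_cons, hD] at hthis
    have hnat : p.length ≤ T1.length + (T2.length + 1) := by exact_mod_cast hthis
    omega
  refine ⟨a, b, hab_ne, hab_nadj, hva.symm, hvb.symm, ?_⟩
  intro w haw hbw
  by_contra hwv
  have hQsup : ∀ z ∈ (T1.reverse.append
      (SimpleGraph.Walk.cons haw (SimpleGraph.Walk.cons hbw.symm T2))).support,
      z ∈ ({v}ᶜ : Set V) := by
    intro z hz
    simp only [Set.mem_compl_iff, Set.mem_singleton_iff]
    intro hzv
    subst hzv
    rw [SimpleGraph.Walk.mem_support_append_iff] at hz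
    rcases hz with hz | hz
    · rw [SimpleGraph.Walk.support_reverse, List.mem_reverse] at hz
      exact hT1sup hz
    · simp only [SimpleGraph.Walk.support_cons, List.mem_cons] at hz
      rcases hz with h1 | h1 | h1
      · exact hane h1.symm
      · exact hwv h1.symm
      · exact hT2sup h1
  obtain ⟨q, hq⟩ := walk_lift_induce _ x.2 y.2 hQsup
  have hle := SimpleGraph.edist_le q
  rw [hq, SimpleGraph.Walk.length_append, SimpleGraph.Walk.length_reverse,
    SimpleGraph.Walk.length_cons, SimpleGraph.Walk.length_cons] at hle
  have hlen : T1.length + (T2.length + 1 + 1) = p.length := by omega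
  rw [hlen, ← hD] at hle
  have : (G.induce ({v}ᶜ : Set V)).edist x y ≤ G.edist ↑x ↑y := hle
  exact absurd this (not_le.mpr hlt)

theorem stmt_17 {V : Type*} [Fintype V] (G : SimpleGraph V)
    (hG : IsDistanceCritical G)
    (hmax : ∀ x y : V, x ≠ y → ¬ G.Adj x y → ¬ IsDistanceCritical (addEdge G x y)) :
    ∀ x y : V, x ≠ y → ¬ G.Adj x y →
      x ∈ {u : V | ∃ v b : V, IsDeterminingPair G v u b} ∨
      y ∈ {u : V | ∃ v b : V, IsDeterminingPair G v u b} := by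
  intro x y hxy hnadj
  by_contra hc
  push_neg at hc
  obtain ⟨hxS, hyS⟩ := hc
  refine hmax x y hxy hnadj ?_
  intro v
  obtain ⟨a, b, hd⟩ := exists_determining_pair (hG v)
  obtain ⟨hab_ne, hab_nadj, hav, hbv, huniq⟩ := hd
  have haS : a ∈ {u : V | ∃ v b : V, IsDeterminingPair G v u b} :=
    ⟨v, b, hab_ne, hab_nadj, hav, hbv, huniq⟩
  have hbS : b ∈ {u : V | ∃ v b : V, IsDeterminingPair G v u b} :=
    ⟨v, a, hab_ne.symm, fun h => hab_nadj h.symm, hbv, hav,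
      fun w h1 h2 => huniq w h2 h1⟩
  have hax : a ≠ x := fun h => hxS (h ▸ haS)
  have hay : a ≠ y := fun h => hyS (h ▸ haS)
  have hbx : b ≠ x := fun h => hxS (h ▸ hbS)
  have hby : b ≠ y := fun h => hyS (h ▸ hbS)
  set H : SimpleGraph V := addEdge G x y with hHdef
  have hGle : G ≤ H := le_sup_left
  -- adjacency to a or b in H is the same as in G
  have hadjA : ∀ z : V, H.Adj a z ↔ G.Adj a z := by
    intro z
    constructor
    · intro h
      rcases h with h | h
      · exact h
      · rw [SimpleGraph.edge_adj] at h
        rcases h.1 with ⟨h1, _⟩ | ⟨h1, _⟩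
        · exact absurd h1 hax
        · exact absurd h1 hay
    · exact fun h => hGle h
  have hadjB : ∀ z : V, H.Adj b z ↔ G.Adj b z := by
    intro z
    constructor
    · intro h
      rcases h with h | h
      · exact h
      · rw [SimpleGraph.edge_adj] at h
        rcases h.1 with ⟨h1, _⟩ | ⟨h1, _⟩
        · exact absurd h1 hbx
        · exact absurd h1 hby
    · exact fun h => hGle h
  have havH : H.Adj a v := hGle hav
  have hbvH : H.Adj b v := hGle hbv
  have hanv : a ≠ v := hav.ne
  have hbnv : b ≠ v := hbv.ne
  refine ⟨⟨a, by simp [hanv]⟩, ⟨b, by simp [hbnv]⟩, ?_⟩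
  -- H.edist a b = 2
  have hHnadj : ¬ H.Adj a b := fun h => hab_nadj ((hadjA b).mp h)
  have h2 : H.edist a b = 2 := by
    have hub : H.edist a b ≤ 2 := by
      have := SimpleGraph.edist_le
        (SimpleGraph.Walk.cons havH (SimpleGraph.Walk.cons hbvH.symm SimpleGraph.Walk.nil))
      simpa using this
    have hlb : 2 ≤ H.edist a b := by
      have h1 : 1 < H.edist a b := by
        refine lt_of_le_of_ne (Order.one_le_iff_pos.mpr (SimpleGraph.edist_pos_of_ne hab_ne)) ?_
        intro h
        exact hHnadj (SimpleGraph.edist_eq_one_iff_adj.mp h.symm)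
      exact Order.add_one_le_of_lt h1
    exact le_antisymm hub hlb
  rw [h2]
  intro heq
  -- the induced distance is 2: extract the middle vertex
  have heq2 : (H.induce ({v}ᶜ : Set V)).edist ⟨a, by simp [hanv]⟩ ⟨b, by simp [hbnv]⟩
      = ((2 : ℕ) : ℕ∞) := by exact_mod_cast heq
  obtain ⟨q, hqlen⟩ := SimpleGraph.exists_walk_of_edist_eq_coe heq2
  have hqnil : ¬ q.Nil := by
    rw [SimpleGraph.Walk.nil_iff_length_eq, hqlen]
    omega
  set w : ({v}ᶜ : Set V) := q.getVert 1 with hwdef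
  have haw : (H.induce ({v}ᶜ : Set V)).Adj ⟨a, by simp [hanv]⟩ w :=
    q.adj_snd hqnil
  have hwb : (H.induce ({v}ᶜ : Set V)).Adj w ⟨b, by simp [hbnv]⟩ := by
    have h1 := q.adj_getVert_succ (i := 1) (by omega)
    have h2 : q.getVert 2 = ⟨b, by simp [hbnv]⟩ := by
      have := q.getVert_length
      rwa [hqlen] at this
    rwa [h2] at h1
  have hawH : H.Adj a ↑w := haw
  have hwbH : H.Adj ↑w b := hwb
  have hwG1 : G.Adj a ↑w := (hadjA ↑w).mp hawH
  have hwG2 : G.Adj b ↑w := (hadjB ↑w).mp hwbH.symm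
  have : (↑w : V) = v := huniq ↑w hwG1 hwG2
  exact w.2 (by simp [this])
end
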